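/- If a finite simple graph G satisfies G ⇒ T_n for some n ≥ 1, then the box product G □ K_{|G|+1} satisfies (G □ K_{|G|+1}) ⇒ T_{n+1}. -/

import Mathlib

/-- An orientation of a simple graph `G`: an asymmetric relation `D` whose
symmetrization is exactly the adjacency relation of `G`. -/
def IsOrientation {V : Type*} (G : SimpleGraph V) (D : V → V → Prop) : Prop :=
  (∀ u v, ¬ (D u v ∧ D v u)) ∧ ∀ u v, G.Adj u v ↔ (D u v ∨ D v u)

/-- A digraph structure on a relation: no loops and no pairs of opposite arcs. -/
def IsDigraph {W : Type*} (E : W → W → Prop) : Prop :=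
  ∀ u v, ¬ (E u v ∧ E v u)

/-- `G ⇒ E`: every orientation `D` of `G` contains an isometric copy of the digraph `E`:
an injective map `f` inducing an isomorphism onto its image, preserving orientations,
such that distances (in the underlying undirected graphs) are preserved. -/
def IsoRamseyArrow {V W : Type*} (G : SimpleGraph V) (E : W → W → Prop) : Prop :=
  ∀ D : V → V → Prop, IsOrientation G D →
    ∃ f : W → V, Function.Injective f ∧
      (∀ u v, E u v ↔ D (f u) (f v)) ∧
      (∀ u v, (SimpleGraph.fromRel E).edist u v = G.edist (f u) (f v))

/-- An oriented tree: a digraph whose underlying undirected graph is a tree. -/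
def IsOrientedTree {W : Type*} (E : W → W → Prop) : Prop :=
  IsDigraph E ∧ (SimpleGraph.fromRel E).IsTree

/-- `G ⇒ 𝒯ₙ` : `G ⇒ T` for every oriented tree `T` on `n` vertices. -/
def IsoRamseyArrowTrees {V : Type*} (G : SimpleGraph V) (n : ℕ) : Prop :=
  ∀ (W : Type) (_ : Fintype W), Fintype.card W = n →
    ∀ E : W → W → Prop, IsOrientedTree E → IsoRamseyArrow G E

/- ### Auxiliary lemmas -/

/-- Pigeonhole for a family of "tournaments": if we have `card V` many total relations
on `Fin k` with `card V < k`, some index has an out-arc in every member. -/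
lemma aux_tournament_pick {V : Type*} [Fintype V] {k : ℕ} (hk : Fintype.card V < k)
    (R : V → Fin k → Fin k → Prop)
    (htot : ∀ g i j, i ≠ j → R g i j ∨ R g j i) : ∃ i, ∀ g, ∃ j, R g i j := by
  by_contra h
  push_neg at h
  choose c hc using h
  have hinj : Function.Injective c := by
    intro i j hij
    by_contra hne
    rcases htot (c i) i j hne with h1 | h1
    · exact hc i j h1
    · rw [hij] at h1
      exact hc j i h1
  have := Fintype.card_le_of_injective c hinj
  simp only [Fintype.card_fin] at this
  omega

lemma aux_boxProd_length_le {α β : Type*} {G : SimpleGraph α} {H : SimpleGraph β}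
    {x y : α × β} (p : (G.boxProd H).Walk x y) :
    G.edist x.1 y.1 + H.edist x.2 y.2 ≤ p.length := by
  induction p with
  | nil => simp [SimpleGraph.edist_self]
  | @cons a b c h q ih =>
    rw [SimpleGraph.Walk.length_cons]
    rcases SimpleGraph.boxProd_adj.mp h with ⟨h1, h2⟩ | ⟨h1, h2⟩
    · calc G.edist a.1 c.1 + H.edist a.2 c.2
          ≤ (G.edist a.1 b.1 + G.edist b.1 c.1) + H.edist b.2 c.2 := by
            rw [h2]; gcongr; exact SimpleGraph.edist_triangle
        _ = 1 + (G.edist b.1 c.1 + H.edist b.2 c.2) := by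
            rw [SimpleGraph.edist_eq_one_iff_adj.mpr h1]; ring
        _ ≤ 1 + (q.length : ℕ∞) := by gcongr
        _ = ((q.length + 1 : ℕ) : ℕ∞) := by push_cast; ring
    · calc G.edist a.1 c.1 + H.edist a.2 c.2
          ≤ G.edist b.1 c.1 + (H.edist a.2 b.2 + H.edist b.2 c.2) := by
            rw [h2]; gcongr; exact SimpleGraph.edist_triangle
        _ = 1 + (G.edist b.1 c.1 + H.edist b.2 c.2) := by
            rw [SimpleGraph.edist_eq_one_iff_adj.mpr h1]; ring
        _ ≤ 1 + (q.length : ℕ∞) := by gcongr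
        _ = ((q.length + 1 : ℕ) : ℕ∞) := by push_cast; ring

lemma aux_boxProd_edist {α β : Type*} (G : SimpleGraph α) (H : SimpleGraph β) (x y : α × β) :
    (G.boxProd H).edist x y = G.edist x.1 y.1 + H.edist x.2 y.2 := by
  refine le_antisymm ?_ ?_
  · by_cases hG1 : G.edist x.1 y.1 = ⊤
    · rw [hG1]; simp
    by_cases hH1 : H.edist x.2 y.2 = ⊤
    · rw [hH1]; simp
    obtain ⟨p, hp⟩ := SimpleGraph.exists_walk_of_edist_ne_top hG1
    obtain ⟨q, hq⟩ := SimpleGraph.exists_walk_of_edist_ne_top hH1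
    have hle := SimpleGraph.edist_le ((p.boxProdLeft (H := H) x.2).append (q.boxProdRight G y.1))
    rw [SimpleGraph.Walk.length_append] at hle
    have hlen1 : (p.boxProdLeft (H := H) x.2).length = p.length := by
      simp [SimpleGraph.Walk.boxProdLeft]
      exact SimpleGraph.Walk.length_map ..
    have hlen2 : (q.boxProdRight G y.1).length = q.length := by
      simp [SimpleGraph.Walk.boxProdRight]
      exact SimpleGraph.Walk.length_map ..
    rw [hlen1, hlen2] at hle
    calc (G.boxProd H).edist x y ≤ ((p.length + q.length : ℕ) : ℕ∞) := hle
      _ = G.edist x.1 y.1 + H.edist x.2 y.2 := by push_cast; rw [hp, hq]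
  · rw [SimpleGraph.edist_eq_sInf]
    refine le_sInf ?_
    rintro _ ⟨p, rfl⟩
    exact aux_boxProd_length_le p

/-- Distances from a leaf: if `y` is the unique neighbour of `x`, then for `u ≠ x`,
`d(x,u) = d(y,u) + 1`. -/
lemma aux_leaf_edist {W : Type*} {T : SimpleGraph W} {x y : W} (hxy : T.Adj x y)
    (hy : ∀ z, T.Adj x z → z = y) {u : W} (hu : u ≠ x) :
    T.edist x u = T.edist y u + 1 := by
  refine le_antisymm ?_ ?_
  · calc T.edist x u ≤ T.edist x y + T.edist y u := SimpleGraph.edist_triangle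
      _ = 1 + T.edist y u := by rw [SimpleGraph.edist_eq_one_iff_adj.mpr hxy]
      _ = T.edist y u + 1 := add_comm _ _
  · rw [SimpleGraph.edist_eq_sInf (u := x)]
    refine le_sInf ?_
    rintro _ ⟨p, rfl⟩
    obtain ⟨w, h, p', rfl⟩ := SimpleGraph.Walk.exists_eq_cons_of_ne (Ne.symm hu) p
    obtain rfl : w = y := hy w h
    show _ ≤ ((SimpleGraph.Walk.cons h p').length : ℕ∞)
    rw [SimpleGraph.Walk.length_cons]
    push_cast
    gcongr
    exact SimpleGraph.edist_le p'

/-- A path between two vertices distinct from a leaf `x` avoids `x`. -/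
lemma aux_path_avoid {W : Type*} {T : SimpleGraph W} {x y : W}
    (hy : ∀ z, T.Adj x z → z = y)
    {a b : W} (p : T.Walk a b) (hp : p.IsPath) (ha : a ≠ x) (hb : b ≠ x) :
    x ∉ p.support := by
  classical
  intro hx
  have hspec := p.take_spec hx
  have hnd : ((p.takeUntil x hx).append (p.dropUntil x hx)).support.Nodup := by
    rw [hspec]; exact hp.support_nodup
  rw [SimpleGraph.Walk.support_append] at hnd
  have hdisj := List.disjoint_of_nodup_append hnd
  have h1 : y ∈ (p.takeUntil x hx).support := by
    obtain ⟨w, hadj, r, hr⟩ :=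
      SimpleGraph.Walk.exists_eq_cons_of_ne (Ne.symm ha) (p.takeUntil x hx).reverse
    have hw : w = y := hy w hadj
    have hmem : w ∈ (p.takeUntil x hx).reverse.support := by
      rw [hr, SimpleGraph.Walk.support_cons]
      exact List.mem_cons_of_mem _ r.start_mem_support
    rw [hw] at hmem
    rwa [SimpleGraph.Walk.support_reverse, List.mem_reverse] at hmem
  have h2 : y ∈ (p.dropUntil x hx).support.tail := by
    obtain ⟨w, hadj, r, hr⟩ :=
      SimpleGraph.Walk.exists_eq_cons_of_ne (fun h => hb h.symm) (p.dropUntil x hx)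
    have hw : w = y := hy w hadj
    rw [hr, SimpleGraph.Walk.support_cons]
    exact hw ▸ r.start_mem_support
  exact hdisj h1 h2

/-- Lift a walk avoiding `x` to the subgraph on vertices `≠ x`. -/
lemma aux_lift_walk {W : Type*} {T : SimpleGraph W} {x : W}
    {T₂ : SimpleGraph {w : W // w ≠ x}}
    (hadj : ∀ a b : {w : W // w ≠ x}, T₂.Adj a b ↔ T.Adj a.1 b.1)
    {a b : W} (p : T.Walk a b) :
    x ∉ p.support → ∀ (ha : a ≠ x) (hb : b ≠ x),
      ∃ q : T₂.Walk ⟨a, ha⟩ ⟨b, hb⟩, q.length = p.length := by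
  induction p with
  | nil => exact fun _ ha hb => ⟨SimpleGraph.Walk.nil, rfl⟩
  | @cons a c b h q ih =>
    intro hp ha hb
    rw [SimpleGraph.Walk.support_cons] at hp
    have hq : x ∉ q.support := fun hh => hp (List.mem_cons_of_mem _ hh)
    have hc : c ≠ x := fun hh => hq (hh ▸ q.start_mem_support)
    obtain ⟨q', hq'⟩ := ih hq hc hb
    exact ⟨SimpleGraph.Walk.cons ((hadj _ _).mpr h) q', by
      rw [SimpleGraph.Walk.length_cons, SimpleGraph.Walk.length_cons, hq']⟩

/-- Deleting a leaf preserves distances among the remaining vertices. -/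
lemma aux_sub_edist {W : Type*} {T : SimpleGraph W} {x y : W}
    {T₂ : SimpleGraph {w : W // w ≠ x}}
    (hadj : ∀ a b : {w : W // w ≠ x}, T₂.Adj a b ↔ T.Adj a.1 b.1)
    (hy : ∀ z, T.Adj x z → z = y)
    (hconn : T.Connected) (a b : {w : W // w ≠ x}) :
    T₂.edist a b = T.edist a.1 b.1 := by
  classical
  refine le_antisymm ?_ ?_
  · obtain ⟨p, hp⟩ := (hconn.preconnected a.1 b.1).exists_walk_length_eq_edist
    have hpath := p.bypass_isPath
    have havoid := aux_path_avoid hy p.bypass hpath a.2 b.2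
    obtain ⟨q, hq⟩ := aux_lift_walk hadj p.bypass havoid a.2 b.2
    calc T₂.edist a b ≤ q.length := SimpleGraph.edist_le q
      _ ≤ (p.length : ℕ∞) := by
          rw [hq]; exact_mod_cast p.length_bypass_le
      _ = T.edist a.1 b.1 := hp
  · rw [SimpleGraph.edist_eq_sInf (G := T₂)]
    refine le_sInf ?_
    rintro _ ⟨q, rfl⟩
    have : T.edist a.1 b.1 ≤
        (q.map (⟨Subtype.val, fun {c d} h => (hadj c d).mp h⟩ : T₂ →g T)).length :=
      SimpleGraph.edist_le _
    simpa [SimpleGraph.Walk.length_map] using this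

/-- Deleting a leaf from a tree yields a tree. -/
lemma aux_sub_tree {W : Type*} {T : SimpleGraph W} {x y : W}
    {T₂ : SimpleGraph {w : W // w ≠ x}}
    (hT : T.IsTree)
    (hadj : ∀ a b : {w : W // w ≠ x}, T₂.Adj a b ↔ T.Adj a.1 b.1)
    (hy : ∀ z, T.Adj x z → z = y)
    (hne : Nonempty {w : W // w ≠ x}) : T₂.IsTree := by
  classical
  constructor
  · haveI := hne
    constructor
    intro a b
    obtain ⟨p, -⟩ := (hT.isConnected.preconnected a.1 b.1).exists_walk_length_eq_edist
    have hpath := p.bypass_isPath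
    have havoid := aux_path_avoid hy p.bypass hpath a.2 b.2
    obtain ⟨q, -⟩ := aux_lift_walk hadj p.bypass havoid a.2 b.2
    exact ⟨q⟩
  · intro v c hc
    have hinj : Function.Injective
        ((⟨Subtype.val, fun {c d} h => (hadj c d).mp h⟩ : T₂ →g T) : _ → W) :=
      Subtype.val_injective
    exact hT.IsAcyclic _ ((SimpleGraph.Walk.map_isCycle_iff_of_injective hinj).mpr hc)

/-- A finite tree with at least two vertices has a leaf. -/
lemma aux_exists_leaf {W : Type*} [Fintype W] {T : SimpleGraph W} (hT : T.IsTree)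
    (h2 : 2 ≤ Fintype.card W) : ∃ x y, T.Adj x y ∧ ∀ z, T.Adj x z → z = y := by
  classical
  have hcard := hT.card_edgeFinset
  have hdeg : ∃ x, T.degree x ≤ 1 := by
    by_contra h
    push_neg at h
    have hsum : ∑ _v : W, 2 ≤ ∑ v, T.degree v :=
      Finset.sum_le_sum fun i _ => h i
    rw [SimpleGraph.sum_degrees_eq_twice_card_edges] at hsum
    simp only [Finset.sum_const, Finset.card_univ, smul_eq_mul] at hsum
    omega
  obtain ⟨x, hx⟩ := hdeg
  obtain ⟨z, hz⟩ : ∃ z : W, z ≠ x := Fintype.exists_ne_of_one_lt_card (by omega) x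
  obtain ⟨p⟩ := hT.isConnected.preconnected x z
  obtain ⟨w, hadj, -, -⟩ :=
    SimpleGraph.Walk.exists_eq_cons_of_ne (fun h => hz h.symm) p
  refine ⟨x, w, hadj, fun z' hz' => ?_⟩
  exact Finset.card_le_one.mp hx z' (by simpa using hz') w (by simpa using hadj)

theorem stmt3 (n : ℕ) (hn : 1 ≤ n) (V : Type) [Fintype V] (G : SimpleGraph V)
    (hG : IsoRamseyArrowTrees G n) :
    IsoRamseyArrowTrees
      (G.boxProd (⊤ : SimpleGraph (Fin (Fintype.card V + 1)))) (n + 1) := by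
  classical
  intro W instW hW E hE D hD
  obtain ⟨hEdig, hTree⟩ := hE
  obtain ⟨hDasym, hDadj⟩ := hD
  -- a leaf x with unique neighbour y
  obtain ⟨x, y, hxy, hy⟩ := aux_exists_leaf hTree (by omega)
  have hyx : y ≠ x := fun h => (SimpleGraph.irrefl _) (h ▸ hxy)
  -- basic facts about D
  have hDirr : ∀ a, ¬ D a a := fun a ha =>
    (G.boxProd (⊤ : SimpleGraph (Fin (Fintype.card V + 1)))).irrefl ((hDadj a a).mpr (Or.inl ha))
  have hDAdj : ∀ a b, D a b →
      (G.boxProd (⊤ : SimpleGraph (Fin (Fintype.card V + 1)))).Adj a b :=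
    fun a b h => (hDadj a b).mpr (Or.inl h)
  -- the tournaments in the K-fibers
  have htot : ∀ (g : V) (i j : Fin (Fintype.card V + 1)), i ≠ j → D (g, i) (g, j) ∨ D (g, j) (g, i) := by
    intro g i j hij
    refine (hDadj _ _).mp ?_
    exact SimpleGraph.boxProd_adj.mpr (Or.inr ⟨hij, rfl⟩)
  set P : V → Fin (Fintype.card V + 1) → Fin (Fintype.card V + 1) → Prop :=
    fun g i j => if E y x then D (g, i) (g, j) else D (g, j) (g, i) with hP
  obtain ⟨i₀, hi₀⟩ := aux_tournament_pick (k := Fintype.card V + 1) (Nat.lt_succ_self _) P (by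
    intro g i j hij
    by_cases h : E y x
    · simpa [hP, h] using htot g i j hij
    · simpa [hP, h] using (htot g i j hij).symm)
  -- the orientation of G induced on layer i₀
  set Di : V → V → Prop := fun g g' => D (g, i₀) (g', i₀) with hDi
  have hDiOr : IsOrientation G Di := by
    refine ⟨fun u v h => hDasym _ _ h, fun u v => ?_⟩
    rw [show G.Adj u v ↔
        (G.boxProd (⊤ : SimpleGraph (Fin (Fintype.card V + 1)))).Adj (u, i₀) (v, i₀) from
      SimpleGraph.boxProd_adj_left.symm]
    exact hDadj _ _
  -- the tree with the leaf deleted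
  set E' : {w : W // w ≠ x} → {w : W // w ≠ x} → Prop := fun a b => E a.1 b.1 with hE'
  have hadj2 : ∀ a b : {w : W // w ≠ x},
      (SimpleGraph.fromRel E').Adj a b ↔ (SimpleGraph.fromRel E).Adj a.1 b.1 := by
    intro a b
    simp only [SimpleGraph.fromRel_adj, hE']
    constructor
    · rintro ⟨h1, h2⟩; exact ⟨fun hh => h1 (Subtype.ext hh), h2⟩
    · rintro ⟨h1, h2⟩; exact ⟨fun hh => h1 (congrArg Subtype.val hh), h2⟩
  have hW'card : Fintype.card {w : W // w ≠ x} = n := by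
    have h1 := Fintype.card_subtype_compl (fun w : W => w = x)
    have h2 : Fintype.card {w : W // w = x} = 1 := Fintype.card_subtype_eq x
    rw [h2, hW] at h1
    simpa using h1
  have hne' : Nonempty {w : W // w ≠ x} := ⟨⟨y, hyx⟩⟩
  have hTree' : (SimpleGraph.fromRel E').IsTree := aux_sub_tree hTree hadj2 hy hne'
  have hdig' : IsDigraph E' := fun a b h => hEdig a.1 b.1 h
  obtain ⟨f', hf'inj, hf'arc, hf'dist⟩ :=
    hG {w : W // w ≠ x} inferInstance hW'card E' ⟨hdig', hTree'⟩ Di hDiOr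
  set gy : V := f' ⟨y, hyx⟩ with hgy
  obtain ⟨j, hj⟩ := hi₀ gy
  have hji : j ≠ i₀ := by
    intro hh
    subst hh
    by_cases h : E y x <;> simp only [hP, h, if_true, if_false] at hj <;>
      exact hDirr _ hj
  have hdirT : E y x → D (gy, i₀) (gy, j) := fun h => by simpa [hP, h] using hj
  have hdirF : ¬ E y x → D (gy, j) (gy, i₀) := fun h => by simpa [hP, h] using hj
  have hxyE : E x y ∨ E y x := ((SimpleGraph.fromRel_adj E x y).mp hxy).2
  set f : W → V × Fin (Fintype.card V + 1) :=
    fun u => if h : u = x then (gy, j) else (f' ⟨u, h⟩, i₀) with hf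
  have hfx : f x = (gy, j) := by simp [hf]
  have hfne : ∀ (u : W) (hu : u ≠ x), f u = (f' ⟨u, hu⟩, i₀) := by
    intro u hu; simp [hf, hu]
  -- f' composed with inclusion never hits gy except at y
  have hgy_inj : ∀ (u : W) (hu : u ≠ x), f' ⟨u, hu⟩ = gy → u = y := by
    intro u hu h
    have := hf'inj (h.trans hgy)
    exact congrArg Subtype.val this
  refine ⟨f, ?_, ?_, ?_⟩
  · -- injectivity
    intro u v huv
    by_cases hu : u = x <;> by_cases hv : v = x
    · rw [hu, hv]
    · rw [hu, hfx, hfne v hv] at huv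
      exact absurd (congrArg Prod.snd huv) hji
    · rw [hv, hfx, hfne u hu] at huv
      exact absurd (congrArg Prod.snd huv) (Ne.symm hji)
    · rw [hfne u hu, hfne v hv] at huv
      have h1 : f' ⟨u, hu⟩ = f' ⟨v, hv⟩ := congrArg Prod.fst huv
      exact congrArg Subtype.val (hf'inj h1)
  · -- arcs
    intro u v
    by_cases hu : u = x <;> by_cases hv : v = x
    · rw [hu, hv, hfx]
      exact ⟨fun h => absurd ⟨h, h⟩ (hEdig x x), fun h => absurd h (hDirr _)⟩
    · rw [hu, hfx, hfne v hv]
      by_cases hvy : v = y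
      · have hfy : f' ⟨v, hv⟩ = gy := by subst hvy; rfl
        rw [hfy]
        by_cases hdir : E y x
        · constructor
          · intro h; exact absurd ⟨hvy ▸ h, hdir⟩ (hEdig x y)
          · intro h; exact absurd ⟨hdirT hdir, h⟩ (hDasym _ _)
        · exact ⟨fun _ => hdirF hdir,
            fun _ => by rw [hvy]; exact hxyE.resolve_right hdir⟩
      · constructor
        · intro h
          have : (SimpleGraph.fromRel E).Adj x v :=
            (SimpleGraph.fromRel_adj E x v).mpr ⟨fun hh => hv hh.symm, Or.inl h⟩
          exact absurd (hy v this) hvy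
        · intro h
          have hA := hDAdj _ _ h
          rcases SimpleGraph.boxProd_adj.mp hA with ⟨-, h2⟩ | ⟨-, h2⟩
          · exact absurd h2 hji
          · exact absurd (hgy_inj v hv h2.symm) hvy
    · rw [hv, hfx, hfne u hu]
      by_cases huy : u = y
      · have hfy : f' ⟨u, hu⟩ = gy := by subst huy; rfl
        rw [hfy]
        by_cases hdir : E y x
        · exact ⟨fun _ => hdirT hdir, fun _ => by rw [huy]; exact hdir⟩
        · constructor
          · intro h; rw [huy] at h; exact absurd h hdir
          · intro h; exact absurd ⟨h, hdirF hdir⟩ (hDasym _ _)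
      · constructor
        · intro h
          have : (SimpleGraph.fromRel E).Adj x u :=
            (SimpleGraph.fromRel_adj E x u).mpr ⟨fun hh => hu hh.symm, Or.inr h⟩
          exact absurd (hy u this) huy
        · intro h
          have hA := hDAdj _ _ h
          rcases SimpleGraph.boxProd_adj.mp hA with ⟨-, h2⟩ | ⟨-, h2⟩
          · exact absurd h2.symm hji
          · exact absurd (hgy_inj u hu h2) huy
    · rw [hfne u hu, hfne v hv]
      exact hf'arc ⟨u, hu⟩ ⟨v, hv⟩
  · -- distances
    have hsubd := aux_sub_edist hadj2 hy hTree.isConnected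
    have hbox := aux_boxProd_edist G (⊤ : SimpleGraph (Fin (Fintype.card V + 1)))
    intro u v
    by_cases hu : u = x <;> by_cases hv : v = x
    · rw [hu, hv]
      simp [SimpleGraph.edist_self]
    · rw [hu, hfx, hfne v hv, aux_leaf_edist hxy hy hv, hbox]
      simp only
      rw [SimpleGraph.edist_top_of_ne hji]
      have := hsubd ⟨y, hyx⟩ ⟨v, hv⟩
      rw [← this, hf'dist ⟨y, hyx⟩ ⟨v, hv⟩, ← hgy]
    · rw [hv, hfx, hfne u hu, SimpleGraph.edist_comm,
        aux_leaf_edist hxy hy hu, hbox]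
      simp only
      rw [SimpleGraph.edist_top_of_ne (Ne.symm hji)]
      have := hsubd ⟨y, hyx⟩ ⟨u, hu⟩
      rw [← this, hf'dist ⟨y, hyx⟩ ⟨u, hu⟩, ← hgy,
        SimpleGraph.edist_comm (u := f' ⟨u, hu⟩)]
    · rw [hfne u hu, hfne v hv, hbox]
      simp only
      rw [SimpleGraph.edist_self, add_zero]
      have := hsubd ⟨u, hu⟩ ⟨v, hv⟩
      rw [← this, hf'dist ⟨u, hu⟩ ⟨v, hv⟩]
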